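/- Let R be a ring object (a monoid object) in a symmetric monoidal category C. If the underlying object of R is invertible with respect to the tensor product, then the unit map u : 𝟙 → R is an isomorphism. -/

import Mathlib

open CategoryTheory MonoidalCategory

/-- If the underlying object of a monoid object `R` in a symmetric monoidal category is
invertible (i.e. admits a tensor-inverse), then the unit map `𝟙 → R` is an isomorphism. -/
theorem stmt_11 {C : Type*} [Category C] [MonoidalCategory C] [SymmetricCategory C]
    (R : Mon C) (hinv : ∃ R' : C, Nonempty (R.X ⊗ R' ≅ 𝟙_ C)) :
    IsIso (MonObj.one : 𝟙_ C ⟶ R.X) := by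
  obtain ⟨R', ⟨e⟩⟩ := hinv
  have e' : R' ⊗ R.X ≅ 𝟙_ C := (β_ R' R.X).trans e
  set F : C ⥤ C := tensorLeft R.X with hFdef
  set G : C ⥤ C := tensorLeft R' with hGdef
  let η : 𝟭 C ≅ F ⋙ G :=
    (leftUnitorNatIso C).symm ≪≫ ((curriedTensor C).mapIso e').symm ≪≫
      tensorLeftTensor R' R.X
  let ε : G ⋙ F ≅ 𝟭 C :=
    (tensorLeftTensor R.X R').symm ≪≫ (curriedTensor C).mapIso e ≪≫ leftUnitorNatIso C
  have hF : F.IsEquivalence := (CategoryTheory.Equivalence.mk F G η ε).isEquivalence_functor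
  have hfull : F.Full := inferInstance
  have hfaithful : F.Faithful := inferInstance
  let t : R.X ⟶ 𝟙_ C := F.preimage ((MonObj.mul : R.X ⊗ R.X ⟶ R.X) ≫ (ρ_ R.X).inv)
  have ht : R.X ◁ t = (MonObj.mul : R.X ⊗ R.X ⟶ R.X) ≫ (ρ_ R.X).inv := F.map_preimage _
  have h1 : (MonObj.one : 𝟙_ C ⟶ R.X) ≫ t = 𝟙 (𝟙_ C) := by
    apply F.map_injective
    have h0 : F.map ((MonObj.one : 𝟙_ C ⟶ R.X) ≫ t) = (R.X ◁ (MonObj.one : 𝟙_ C ⟶ R.X)) ≫ (R.X ◁ t) := by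
      rw [F.map_comp]; rfl
    rw [h0, ht, MonObj.mul_one_assoc]
    simp only [Iso.hom_inv_id]
    rw [F.map_id]
    rfl
  have h2 : t ≫ (MonObj.one : 𝟙_ C ⟶ R.X) = 𝟙 R.X := by
    have exch : (MonObj.one : 𝟙_ C ⟶ R.X) ▷ R.X ≫ R.X ◁ t = 𝟙_ C ◁ t ≫ (MonObj.one : 𝟙_ C ⟶ R.X) ▷ 𝟙_ C :=
      (whisker_exchange (MonObj.one : 𝟙_ C ⟶ R.X) t).symm
    rw [ht, MonObj.one_mul_assoc] at exch
    -- exch : (λ_ R.X).hom ≫ (ρ_ R.X).inv = 𝟙_ C ◁ t ≫ (MonObj.one : 𝟙_ C ⟶ R.X) ▷ 𝟙_ C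
    have key : (λ_ R.X).hom = 𝟙_ C ◁ t ≫ (MonObj.one : 𝟙_ C ⟶ R.X) ▷ 𝟙_ C ≫ (ρ_ R.X).hom := by
      rw [← Category.assoc, ← exch]; simp
    rw [MonoidalCategory.rightUnitor_naturality] at key
    have lnat : 𝟙_ C ◁ t ≫ (ρ_ (𝟙_ C)).hom = (λ_ R.X).hom ≫ t := by
      rw [← unitors_equal, MonoidalCategory.leftUnitor_naturality]
    have final : (λ_ R.X).hom ≫ t ≫ (MonObj.one : 𝟙_ C ⟶ R.X) = (λ_ R.X).hom ≫ 𝟙 R.X := by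
      rw [Category.comp_id, ← Category.assoc, ← lnat, Category.assoc, ← key]
    exact (cancel_epi (λ_ R.X).hom).mp final
  exact ⟨t, h1, h2⟩
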